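/- arXiv:2605.30648 — 6 statements merged into one kernel-verified Lean document; each statement's English description precedes it below -/
import Mathlib

section
/- Consider the logistic loss f(θ) = (1/n)·Σᵢ ln(1 + exp(−yᵢ·⟨xᵢ, θ⟩)) on separable data with normalized margin γ_p > 0 (i.e. there exists θ* with yᵢ·⟨xᵢ, θ*⟩/‖θ*‖_p ≥ γ_p for all i). If f(θ) ≤ ln(2)/n, then ‖∇f(θ)‖_q ≥ (γ_p/2)·f(θ); and if f(θ) > ln(2)/n, then ‖∇f(θ)‖_q ≥ γ_p/(3n). -/
open scoped BigOperators

noncomputable def lpNorm (p : ENNReal) {ι : Type*} [Fintype ι] (x : ι → ℝ) : ℝ :=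
  ‖(WithLp.equiv p (ι → ℝ)).symm x‖

noncomputable def opNorm (p q : ENNReal) {ι κ : Type*} [Fintype ι] [Fintype κ]
    (A : Matrix ι κ ℝ) : ℝ :=
  sSup {c | ∃ x : κ → ℝ, lpNorm p x ≤ 1 ∧ c = lpNorm q (A.mulVec x)}

noncomputable def dotCLM {n : ℕ} (v : Fin n → ℝ) : (Fin n → ℝ) →L[ℝ] ℝ :=
  LinearMap.toContinuousLinearMap (∑ i, v i • (LinearMap.proj i : (Fin n → ℝ) →ₗ[ℝ] ℝ))

noncomputable def mulVecCLM {m n : ℕ} (M : Matrix (Fin m) (Fin n) ℝ) :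
    (Fin n → ℝ) →L[ℝ] (Fin m → ℝ) :=
  LinearMap.toContinuousLinearMap M.mulVecLin

lemma dotCLM_apply' {m : ℕ} (w v : Fin m → ℝ) : dotCLM w v = ∑ i, w i * v i := by
  simp [dotCLM, LinearMap.sum_apply]

lemma lpNorm_eq_sum' {m : ℕ} {r : ENNReal} (hr : 0 < r.toReal) (a : Fin m → ℝ) :
    lpNorm r a = (∑ i, |a i| ^ r.toReal) ^ (1/r.toReal) := by
  rw [lpNorm, PiLp.norm_eq_sum hr]
  simp [Real.norm_eq_abs]

lemma lpNorm_one_eq' {m : ℕ} (a : Fin m → ℝ) : lpNorm 1 a = ∑ i, |a i| := by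
  rw [lpNorm_eq_sum' (by simp)]
  simp

lemma abs_le_lpNorm_top' {m : ℕ} (a : Fin m → ℝ) (i : Fin m) :
    |a i| ≤ lpNorm (⊤ : ENNReal) a := by
  rw [lpNorm, PiLp.norm_eq_ciSup]
  have := le_ciSup (f := fun j => ‖((WithLp.equiv (⊤ : ENNReal) (Fin m → ℝ)).symm a) j‖)
    (Set.Finite.bddAbove (Set.finite_range _)) i
  simpa [Real.norm_eq_abs] using this

lemma lpNorm_nonneg' {m : ℕ} (r : ENNReal) (hr : 1 ≤ r) (a : Fin m → ℝ) : 0 ≤ lpNorm r a := by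
  haveI : Fact (1 ≤ r) := ⟨hr⟩
  exact norm_nonneg _

lemma lpNorm_smul' {m : ℕ} (r : ENNReal) (hr : 1 ≤ r) (c : ℝ) (a : Fin m → ℝ) :
    lpNorm r (c • a) = |c| * lpNorm r a := by
  haveI : Fact (1 ≤ r) := ⟨hr⟩
  rw [lpNorm, lpNorm, WithLp.equiv_symm_apply, WithLp.toLp_smul, norm_smul, Real.norm_eq_abs]

lemma holder_abs' {m : ℕ} (p q : ENNReal) (hpq : 1/p + 1/q = 1) (a b : Fin m → ℝ) :
    ∑ i, |a i| * |b i| ≤ lpNorm q a * lpNorm p b := by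
  simp only [one_div] at hpq
  have hc : p.HolderConjugate q := ⟨by simpa using hpq⟩
  have hp1 : 1 ≤ p := ENNReal.HolderConjugate.one_le p q
  have hq1 : 1 ≤ q := ENNReal.HolderConjugate.one_le q p
  rcases eq_or_ne p ⊤ with hpt | hpt
  · have hq : q = 1 := by
      have : q⁻¹ = 1 := by simpa [hpt] using hpq
      simpa using congrArg (·⁻¹) this
    subst hq hpt
    rw [lpNorm_one_eq']
    calc ∑ i, |a i| * |b i| ≤ ∑ i, |a i| * lpNorm (⊤ : ENNReal) b :=
          Finset.sum_le_sum fun i _ =>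
            mul_le_mul_of_nonneg_left (abs_le_lpNorm_top' b i) (abs_nonneg _)
      _ = (∑ i, |a i|) * lpNorm (⊤ : ENNReal) b := by rw [Finset.sum_mul]
  · rcases eq_or_ne q ⊤ with hqt | hqt
    · have hpeq : p = 1 := by
        have : p⁻¹ = 1 := by simpa [hqt] using hpq
        simpa using congrArg (·⁻¹) this
      subst hpeq hqt
      rw [lpNorm_one_eq']
      calc ∑ i, |a i| * |b i| ≤ ∑ i, lpNorm (⊤ : ENNReal) a * |b i| :=
            Finset.sum_le_sum fun i _ =>
              mul_le_mul_of_nonneg_right (abs_le_lpNorm_top' a i) (abs_nonneg _)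
        _ = lpNorm (⊤ : ENNReal) a * ∑ i, |b i| := by rw [Finset.mul_sum]
    · have hp0 : p ≠ 0 := ENNReal.HolderConjugate.ne_zero p q
      have hq0 : q ≠ 0 := ENNReal.HolderConjugate.ne_zero q p
      have hplt : 1 < p := by
        rcases lt_or_eq_of_le hp1 with h | h
        · exact h
        · exfalso
          rw [← h, inv_one] at hpq
          have h10 : (1:ENNReal) + q⁻¹ = 1 + 0 := by rw [add_zero]; exact hpq
          have : q⁻¹ = (0 : ENNReal) := (ENNReal.add_right_inj (by simp)).mp h10
          exact hqt (ENNReal.inv_eq_zero.mp this)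
      have hqlt : 1 < q := by
        rcases lt_or_eq_of_le hq1 with h | h
        · exact h
        · exfalso
          rw [← h, inv_one] at hpq
          have h10 : (1:ENNReal) + p⁻¹ = 1 + 0 := by rw [add_zero, add_comm]; exact hpq
          have : p⁻¹ = (0 : ENNReal) := (ENNReal.add_right_inj (by simp)).mp h10
          exact hpt (ENNReal.inv_eq_zero.mp this)
      have hptr : 1 < p.toReal := by
        have := (ENNReal.toReal_lt_toReal (by simp) hpt).mpr hplt
        simpa using this
      have hqtr : 1 < q.toReal := by
        have := (ENNReal.toReal_lt_toReal (by simp) hqt).mpr hqlt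
        simpa using this
      have hsum : p.toReal⁻¹ + q.toReal⁻¹ = 1 := by
        have := congrArg ENNReal.toReal hpq
        rw [ENNReal.toReal_add (by simpa using hp0) (by simpa using hq0),
          ENNReal.toReal_inv, ENNReal.toReal_inv] at this
        simpa using this
      have hrc : Real.HolderConjugate p.toReal q.toReal := Real.holderConjugate_iff.mpr ⟨hptr, by simpa [one_div] using hsum⟩
      have h := Real.inner_le_Lp_mul_Lq (s := Finset.univ) (fun i => |a i|) (fun i => |b i|)
        hrc.symm
      simp only [abs_abs] at h
      rw [lpNorm_eq_sum' (r := q) (by linarith), lpNorm_eq_sum' (r := p) (by linarith)]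
      calc ∑ i, |a i| * |b i| ≤ _ := h
        _ = _ := by ring

/-- Logistic loss on separable data: gradient lower bounds in the two regimes. -/
theorem stmt11 {n d : ℕ} (hn : 0 < n) (p q : ENNReal) (hp : 1 ≤ p) (hq : 1 ≤ q)
    (hpq : 1/p + 1/q = 1)
    (x : Fin n → Fin d → ℝ) (y : Fin n → ℝ) (hy : ∀ i, y i = 1 ∨ y i = -1)
    (f : (Fin d → ℝ) → ℝ)
    (hf : ∀ θ, f θ = (1 / (n : ℝ)) *
      ∑ i, Real.log (1 + Real.exp (-(y i) * ∑ j, x i j * θ j)))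
    (g : (Fin d → ℝ) → (Fin d → ℝ))
    (hgrad : ∀ θ, HasFDerivAt f (dotCLM (g θ)) θ)
    (γ : ℝ) (hγ : 0 < γ) (θstar : Fin d → ℝ)
    (hsep : ∀ i, γ ≤ y i * (∑ j, x i j * θstar j) / lpNorm p θstar) :
    ∀ θ, (f θ ≤ Real.log 2 / n → (γ / 2) * f θ ≤ lpNorm q (g θ)) ∧
      (Real.log 2 / n < f θ → γ / (3 * n) ≤ lpNorm q (g θ)) := by
  intro θ
  haveI : Fact (1 ≤ p) := ⟨hp⟩
  have hn' : (0:ℝ) < n := by exact_mod_cast hn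
  set s : ℝ := lpNorm p θstar with hs
  have hs_ne : s ≠ 0 := by
    intro h0
    have h := hsep ⟨0, hn⟩
    rw [h0, div_zero] at h
    linarith
  have hs_pos : 0 < s := lt_of_le_of_ne (lpNorm_nonneg' p hp θstar) (Ne.symm hs_ne)
  set A : Fin n → ℝ := fun i => ∑ j, x i j * θ j with hA
  set E : Fin n → ℝ := fun i => Real.exp (-(y i) * A i) with hE
  have hEpos : ∀ i, 0 < E i := fun i => by rw [hE]; exact Real.exp_pos _
  set T : ℝ := ∑ i, E i / (1 + E i) with hT
  set S : ℝ := ∑ i, Real.log (1 + E i) with hS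
  have hfθ : f θ = (1/(n:ℝ)) * S := by
    rw [hf θ]
  set v : Fin d → ℝ := (-(1/s)) • θstar with hv
  set B : Fin n → ℝ := fun i => ∑ j, x i j * v j with hB
  have hkey : dotCLM (g θ) v = (1/(n:ℝ)) * ∑ i, (-(y i) * B i) * (E i / (1 + E i)) := by
    have hline : HasDerivAt (fun t : ℝ => θ + t • v) v 0 := by
      simpa using ((hasDerivAt_id (0:ℝ)).smul_const v).const_add θ
    have hg' : HasFDerivAt f (dotCLM (g θ)) ((fun t : ℝ => θ + t • v) 0) := by
      simpa using hgrad θ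
    have h2 : HasDerivAt (fun t : ℝ => f (θ + t • v)) (dotCLM (g θ) v) 0 :=
      hg'.comp_hasDerivAt 0 hline
    have heq : (fun t : ℝ => f (θ + t • v)) =
        fun t => (1/(n:ℝ)) * ∑ i, Real.log (1 + Real.exp (-(y i) * A i + t * (-(y i) * B i))) := by
      funext t
      rw [hf]
      congr 1
      refine Finset.sum_congr rfl fun i _ => ?_
      have hsum : ∑ j, x i j * (θ + t • v) j = A i + t * B i := by
        simp only [hA, hB, Pi.add_apply, Pi.smul_apply, smul_eq_mul, mul_add,
          Finset.sum_add_distrib]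
        congr 1
        rw [Finset.mul_sum]
        exact Finset.sum_congr rfl fun j _ => by ring
      rw [hsum]
      ring_nf
    have h3 : HasDerivAt (fun t : ℝ => f (θ + t • v))
        ((1/(n:ℝ)) * ∑ i, (-(y i) * B i) * (E i / (1 + E i))) 0 := by
      rw [heq]
      have hterm : ∀ i ∈ Finset.univ, HasDerivAt
          (fun t : ℝ => Real.log (1 + Real.exp (-(y i) * A i + t * (-(y i) * B i))))
          ((-(y i) * B i) * (E i / (1 + E i))) 0 := by
        intro i _
        have hl : HasDerivAt (fun t : ℝ => -(y i) * A i + t * (-(y i) * B i))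
            (-(y i) * B i) 0 := by
          simpa using ((hasDerivAt_id (0:ℝ)).mul_const (-(y i) * B i)).const_add (-(y i) * A i)
        have hexp := hl.exp
        have hadd := hexp.const_add 1
        have hlog := hadd.log (by positivity)
        convert hlog using 1
        simp only [hE, zero_mul, add_zero]
        ring
      exact HasDerivAt.const_mul (1/(n:ℝ)) (HasDerivAt.fun_sum hterm)
    exact h2.unique h3
  have hBi : ∀ i, -(y i) * B i = y i * (∑ j, x i j * θstar j) / s := by
    intro i
    have hb : B i = (-(1/s)) * ∑ j, x i j * θstar j := by
      simp only [hB]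
      rw [Finset.mul_sum]
      refine Finset.sum_congr rfl fun j _ => ?_
      simp only [hv, Pi.smul_apply, smul_eq_mul]
      ring
    rw [hb]
    field_simp
  have hTnn : ∀ i, 0 ≤ E i / (1 + E i) := fun i => by
    have := hEpos i; positivity
  have hlow : γ * T / n ≤ lpNorm q (g θ) := by
    have h1 : γ * T ≤ ∑ i, (-(y i) * B i) * (E i / (1 + E i)) := by
      rw [hT, Finset.mul_sum]
      refine Finset.sum_le_sum fun i _ => ?_
      rw [hBi i]
      exact mul_le_mul_of_nonneg_right (hsep i) (hTnn i)
    have h3 : γ * T / n ≤ dotCLM (g θ) v := by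
      rw [hkey]
      calc γ * T / n = (1/(n:ℝ)) * (γ * T) := by ring
        _ ≤ _ := mul_le_mul_of_nonneg_left h1 (by positivity)
    have hvnorm : lpNorm p v = 1 := by
      rw [hv, lpNorm_smul' p hp, ← hs]
      rw [abs_neg, abs_of_pos (by positivity)]
      field_simp
    have h4 : dotCLM (g θ) v ≤ lpNorm q (g θ) * lpNorm p v := by
      rw [dotCLM_apply']
      calc ∑ i, g θ i * v i ≤ |∑ i, g θ i * v i| := le_abs_self _
        _ ≤ ∑ i, |g θ i * v i| := Finset.abs_sum_le_sum_abs _ _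
        _ = ∑ i, |g θ i| * |v i| := by simp [abs_mul]
        _ ≤ _ := holder_abs' p q hpq _ _
    rw [hvnorm, mul_one] at h4
    linarith
  have hlogle : ∀ i, Real.log (1 + E i) ≤ E i := fun i => by
    have h := Real.log_le_sub_one_of_pos (x := 1 + E i) (by have := hEpos i; positivity)
    simpa using h
  have hlognn : ∀ i, 0 ≤ Real.log (1 + E i) := fun i =>
    Real.log_nonneg (by linarith [hEpos i])
  constructor
  · intro hsmall
    rw [hfθ] at hsmall
    have hSle : S ≤ Real.log 2 := by
      have h' : S / n ≤ Real.log 2 / n := by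
        calc S / n = (1/(n:ℝ)) * S := by ring
          _ ≤ Real.log 2 / n := hsmall
      exact (div_le_div_iff_of_pos_right hn').mp h'
    have hEle : ∀ i, E i ≤ 1 := by
      intro i
      have h1 : Real.log (1 + E i) ≤ Real.log 2 := by
        have h2 : Real.log (1 + E i) ≤ S := by
          rw [hS]
          exact Finset.single_le_sum (fun j _ => hlognn j) (Finset.mem_univ i)
        linarith
      have h3 := (Real.log_le_log_iff (by have := hEpos i; positivity) (by norm_num)).mp h1
      linarith
    have hhalf : ∀ i, Real.log (1 + E i) / 2 ≤ E i / (1 + E i) := by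
      intro i
      have h2 : E i / 2 ≤ E i / (1 + E i) := by
        apply div_le_div_of_nonneg_left (hEpos i).le (by have := hEpos i; positivity)
        linarith [hEle i]
      have h3 : Real.log (1 + E i) / 2 ≤ E i / 2 := by linarith [hlogle i]
      linarith
    have hT2 : S / 2 ≤ T := by
      rw [hS, hT, Finset.sum_div]
      exact Finset.sum_le_sum fun i _ => hhalf i
    rw [hfθ]
    calc (γ/2) * ((1/(n:ℝ)) * S) = (γ/n) * (S/2) := by ring
      _ ≤ (γ/n) * T := mul_le_mul_of_nonneg_left hT2 (by positivity)
      _ = γ * T / n := by ring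
      _ ≤ lpNorm q (g θ) := hlow
  · intro hbig
    rw [hfθ] at hbig
    have hSgt : Real.log 2 < S := by
      have h' : Real.log 2 / n < S / n := by
        calc Real.log 2 / n < (1/(n:ℝ)) * S := hbig
          _ = S / n := by ring
      exact (div_lt_div_iff_of_pos_right hn').mp h'
    have hT3 : 1/3 ≤ T := by
      by_cases hall : ∀ i, E i ≤ 1
      · have h1 : S ≤ ∑ i, E i := by
          rw [hS]
          exact Finset.sum_le_sum fun i _ => hlogle i
        have h2 : (∑ i, E i) / 2 ≤ T := by
          rw [hT, Finset.sum_div]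
          refine Finset.sum_le_sum fun i _ => ?_
          apply div_le_div_of_nonneg_left (hEpos i).le (by have := hEpos i; positivity)
          linarith [hall i]
        have hlog2 : (0.6931471803 : ℝ) < Real.log 2 := Real.log_two_gt_d9
        linarith
      · push_neg at hall
        obtain ⟨i, hi⟩ := hall
        have h1 : E i / (1 + E i) ≤ T := by
          rw [hT]
          exact Finset.single_le_sum (fun j _ => hTnn j) (Finset.mem_univ i)
        have h2 : 1/3 ≤ E i / (1 + E i) := by
          rw [le_div_iff₀ (by have := hEpos i; positivity)]
          nlinarith [hEpos i]
        linarith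
    calc γ / (3 * (n:ℝ)) = (γ/n) * (1/3) := by ring
      _ ≤ (γ/n) * T := mul_le_mul_of_nonneg_left hT3 (by positivity)
      _ = γ * T / n := by ring
      _ ≤ lpNorm q (g θ) := hlow
end

section
/- For the K-armed bandit softmax policy gradient objective f(θ) = r(a*) − ⟨π_θ, r⟩, where π_θ(a) = exp(θ(a))/Σ_{a'} exp(θ(a')), r ∈ [0,1]^K, and a* = argmax_a r(a), it holds for all θ that ‖∇²f(θ)‖_{∞→1} ≤ 6·f(θ). -/
open scoped BigOperators

namespace Stmt12Aux
open ContinuousLinearMap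

variable {K : ℕ}

theorem dotCLM_apply {n : ℕ} (v x : Fin n → ℝ) : dotCLM v x = ∑ i, v i * x i := by
  simp [dotCLM]

theorem dotCLM_single {n : ℕ} (v : Fin n → ℝ) (a : Fin n) : dotCLM v (Pi.single a 1) = v a := by
  simp [dotCLM, Pi.single_apply]

theorem mulVecCLM_apply {m n : ℕ} (M : Matrix (Fin m) (Fin n) ℝ) (x : Fin n → ℝ) :
    mulVecCLM M x = M.mulVec x := by simp [mulVecCLM]

noncomputable def S (θ : Fin K → ℝ) : ℝ := ∑ a, Real.exp (θ a)
noncomputable def N (r θ : Fin K → ℝ) : ℝ := ∑ a, Real.exp (θ a) * r a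
noncomputable def p (θ : Fin K → ℝ) (a : Fin K) : ℝ := Real.exp (θ a) / S θ
noncomputable def m (r θ : Fin K → ℝ) : ℝ := N r θ / S θ
noncomputable def q (r θ : Fin K → ℝ) (a : Fin K) : ℝ := p θ a * (m r θ - r a)
noncomputable def H (r θ : Fin K → ℝ) : Matrix (Fin K) (Fin K) ℝ :=
  Matrix.of fun a b => q r θ a * (if a = b then (1:ℝ) else 0) - q r θ a * p θ b - p θ a * q r θ b

theorem Spos (hK : 0 < K) (θ : Fin K → ℝ) : 0 < S θ := by
  have : Nonempty (Fin K) := ⟨⟨0, hK⟩⟩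
  exact Finset.sum_pos (fun a _ => Real.exp_pos _) Finset.univ_nonempty

theorem p_nonneg (hK : 0 < K) (θ : Fin K → ℝ) (a : Fin K) : 0 ≤ p θ a :=
  div_nonneg (Real.exp_pos _).le (Spos hK θ).le

theorem sum_p (hK : 0 < K) (θ : Fin K → ℝ) : ∑ a, p θ a = 1 := by
  simp only [p, ← Finset.sum_div]
  exact div_self (Spos hK θ).ne'

theorem sum_p_r (hK : 0 < K) (r θ : Fin K → ℝ) : ∑ a, p θ a * r a = m r θ := by
  simp only [p, m, N, div_mul_eq_mul_div, ← Finset.sum_div]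

open ContinuousLinearMap

theorem hasFDerivAt_S {K : ℕ} (θ : Fin K → ℝ) :
    HasFDerivAt S (dotCLM fun a => Real.exp (θ a)) θ := by
  have h := HasFDerivAt.fun_sum (fun a (_ : a ∈ Finset.univ) =>
    (hasFDerivAt_apply a θ).exp)
  refine HasFDerivAt.congr_fderiv h (Eq.symm ?_)
  ext x
  simp [dotCLM]

theorem hasFDerivAt_N {K : ℕ} (r θ : Fin K → ℝ) :
    HasFDerivAt (N r) (dotCLM fun a => Real.exp (θ a) * r a) θ := by
  have h := HasFDerivAt.fun_sum (fun a (_ : a ∈ Finset.univ) =>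
    ((hasFDerivAt_apply a θ).exp).mul_const (r a))
  refine HasFDerivAt.congr_fderiv h (Eq.symm ?_)
  ext x
  simp [dotCLM, mul_comm, mul_assoc, mul_left_comm]


open ContinuousLinearMap

theorem hasFDerivAt_inv_S {K : ℕ} (hK : 0 < K) (θ : Fin K → ℝ) :
    HasFDerivAt (fun θ : Fin K → ℝ => (S θ)⁻¹)
      ((smulRight (1 : ℝ →L[ℝ] ℝ) (-(S θ ^ 2)⁻¹)).comp (dotCLM fun a => Real.exp (θ a))) θ :=
  (hasFDerivAt_inv (Spos hK θ).ne').comp θ (hasFDerivAt_S θ)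

theorem hasFDerivAt_m {K : ℕ} (hK : 0 < K) (r θ : Fin K → ℝ) :
    HasFDerivAt (m r) (dotCLM fun a => p θ a * (r a - m r θ)) θ := by
  have hS0 := (Spos hK θ).ne'
  have h := (hasFDerivAt_N r θ).mul (hasFDerivAt_inv_S hK θ)
  have hfun : (fun θ : Fin K → ℝ => N r θ * (S θ)⁻¹) = m r := by
    funext θ'; rw [m, div_eq_mul_inv]
  change HasFDerivAt (fun θ : Fin K → ℝ => N r θ * (S θ)⁻¹) _ θ at h
  rw [hfun] at h
  refine HasFDerivAt.congr_fderiv h (Eq.symm ?_)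
  ext x
  simp only [dotCLM_apply, ContinuousLinearMap.add_apply, ContinuousLinearMap.smul_apply,
    ContinuousLinearMap.comp_apply, ContinuousLinearMap.smulRight_apply,
    ContinuousLinearMap.one_apply, smul_eq_mul, dotCLM_apply]
  rw [Finset.sum_mul, Finset.mul_sum, Finset.mul_sum, ← Finset.sum_add_distrib]
  refine Finset.sum_congr rfl fun a _ => ?_
  rw [p, m]
  field_simp
  ring

theorem hasFDerivAt_p {K : ℕ} (hK : 0 < K) (θ : Fin K → ℝ) (a : Fin K) :
    HasFDerivAt (fun θ => p θ a)
      (dotCLM fun b => p θ a * ((if a = b then (1:ℝ) else 0) - p θ b)) θ := by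
  have hS0 := (Spos hK θ).ne'
  have h := ((hasFDerivAt_apply a θ).exp).mul (hasFDerivAt_inv_S hK θ)
  have hfun : (fun θ : Fin K → ℝ => Real.exp (θ a) * (S θ)⁻¹) = fun θ => p θ a := by
    funext θ'; rw [p, div_eq_mul_inv]
  change HasFDerivAt (fun θ : Fin K → ℝ => Real.exp (θ a) * (S θ)⁻¹) _ θ at h
  rw [hfun] at h
  refine HasFDerivAt.congr_fderiv h (Eq.symm ?_)
  ext x
  simp only [dotCLM_apply, ContinuousLinearMap.add_apply, ContinuousLinearMap.smul_apply,
    ContinuousLinearMap.comp_apply, ContinuousLinearMap.smulRight_apply,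
    ContinuousLinearMap.one_apply, ContinuousLinearMap.proj_apply, smul_eq_mul]
  rw [Finset.sum_mul, Finset.mul_sum]
  rw [show (S θ)⁻¹ * (Real.exp (θ a) * x a)
      = ∑ b, (if a = b then (S θ)⁻¹ * (Real.exp (θ a) * x a) else 0) by simp]
  rw [← Finset.sum_add_distrib]
  refine Finset.sum_congr rfl fun b _ => ?_
  by_cases hab : a = b
  · subst hab; simp only [if_pos rfl, eq_self_iff_true, if_true, p]; field_simp; ring
  · simp only [if_neg hab, p]; field_simp; ring


open ContinuousLinearMap

theorem hasFDerivAt_q {K : ℕ} (hK : 0 < K) (r θ : Fin K → ℝ) :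
    HasFDerivAt (q r) (mulVecCLM (H r θ)) θ := by
  rw [hasFDerivAt_pi']
  intro a
  have h := (hasFDerivAt_p hK θ a).mul ((hasFDerivAt_m hK r θ).sub_const (r a))
  have hfun : (fun θ : Fin K → ℝ => p θ a * (m r θ - r a)) = fun θ => q r θ a := by
    funext θ'; rw [q]
  change HasFDerivAt (fun θ : Fin K → ℝ => p θ a * (m r θ - r a)) _ θ at h
  rw [hfun] at h
  refine HasFDerivAt.congr_fderiv h (Eq.symm ?_)
  ext x
  simp only [ContinuousLinearMap.comp_apply, ContinuousLinearMap.proj_apply,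
    ContinuousLinearMap.add_apply, ContinuousLinearMap.smul_apply, smul_eq_mul,
    mulVecCLM_apply, dotCLM_apply]
  rw [Matrix.mulVec, dotProduct]
  rw [Finset.mul_sum, Finset.mul_sum, ← Finset.sum_add_distrib]
  refine Finset.sum_congr rfl fun b _ => ?_
  simp only [H, Matrix.of_apply, q]
  ring



theorem lpNorm_one_eq {ι : Type*} [Fintype ι] (y : ι → ℝ) : lpNorm 1 y = ∑ i, |y i| := by
  rw [lpNorm, PiLp.norm_eq_sum (by norm_num : 0 < (1 : ENNReal).toReal)]
  simp [Real.norm_eq_abs]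

theorem abs_le_lpNorm_top {ι : Type*} [Fintype ι] (x : ι → ℝ) (i : ι) : |x i| ≤ lpNorm ⊤ x := by
  rw [lpNorm, PiLp.norm_eq_ciSup]
  have h : |x i| = ‖(WithLp.equiv ⊤ (ι → ℝ)).symm x i‖ := rfl
  rw [h]
  exact le_ciSup (f := fun j => ‖(WithLp.equiv ⊤ (ι → ℝ)).symm x j‖)
    (Set.Finite.bddAbove (Set.finite_range _)) i



theorem key_bound {K : ℕ} (hK : 0 < K) (r : Fin K → ℝ)
    (astar : Fin K) (hastar : ∀ a, r a ≤ r astar) (θ x : Fin K → ℝ) (hx : ∀ i, |x i| ≤ 1) :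
    ∑ a, |(H r θ).mulVec x a| ≤ 6 * (r astar - m r θ) := by
  have hp := p_nonneg hK θ
  have hsp := sum_p hK θ
  have hmle : m r θ ≤ r astar := by
    rw [← sum_p_r hK r θ]
    calc ∑ a, p θ a * r a ≤ ∑ a, p θ a * r astar :=
          Finset.sum_le_sum fun a _ => mul_le_mul_of_nonneg_left (hastar a) (hp a)
      _ = r astar := by rw [← Finset.sum_mul, hsp, one_mul]
  have hPle : |∑ b, p θ b * x b| ≤ 1 := by
    calc |∑ b, p θ b * x b| ≤ ∑ b, |p θ b * x b| := Finset.abs_sum_le_sum_abs _ _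
      _ ≤ ∑ b, p θ b := Finset.sum_le_sum fun b _ => by
          rw [abs_mul, abs_of_nonneg (hp b)]
          calc p θ b * |x b| ≤ p θ b * 1 := mul_le_mul_of_nonneg_left (hx b) (hp b)
            _ = p θ b := mul_one _
      _ = 1 := hsp
  have hQle : |∑ b, q r θ b * x b| ≤ ∑ b, |q r θ b| := by
    calc |∑ b, q r θ b * x b| ≤ ∑ b, |q r θ b * x b| := Finset.abs_sum_le_sum_abs _ _
      _ ≤ ∑ b, |q r θ b| := Finset.sum_le_sum fun b _ => by
          rw [abs_mul]
          calc |q r θ b| * |x b| ≤ |q r θ b| * 1 :=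
                mul_le_mul_of_nonneg_left (hx b) (abs_nonneg _)
            _ = |q r θ b| := mul_one _
  have hWle : ∑ b, |q r θ b| ≤ 2 * (r astar - m r θ) := by
    have ht0 : ∑ a, p θ a * (r a - m r θ) = 0 := by
      simp only [mul_sub]
      rw [Finset.sum_sub_distrib, sum_p_r hK r θ, ← Finset.sum_mul, hsp, one_mul, sub_self]
    have hW : ∑ b, |q r θ b| = ∑ a, (p θ a * (2 * max (r a - m r θ) 0) - p θ a * (r a - m r θ)) := by
      refine Finset.sum_congr rfl fun a _ => ?_
      rw [q, abs_mul, abs_of_nonneg (hp a), abs_sub_comm]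
      rcases le_total 0 (r a - m r θ) with h | h
      · rw [abs_of_nonneg h, max_eq_left h]; ring
      · rw [abs_of_nonpos h, max_eq_right h]; ring
    rw [hW, Finset.sum_sub_distrib, ht0, sub_zero]
    calc ∑ a, p θ a * (2 * max (r a - m r θ) 0)
        ≤ ∑ a, p θ a * (2 * (r astar - m r θ)) := by
          refine Finset.sum_le_sum fun a _ => mul_le_mul_of_nonneg_left ?_ (hp a)
          have h1 : r a - m r θ ≤ r astar - m r θ := by linarith [hastar a]
          have h2 : (0:ℝ) ≤ r astar - m r θ := by linarith
          have := max_le h1 h2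
          linarith
      _ = 2 * (r astar - m r θ) := by rw [← Finset.sum_mul, hsp, one_mul]
  have hcomp : ∀ a, (H r θ).mulVec x a
      = q r θ a * x a - q r θ a * (∑ b, p θ b * x b) - p θ a * (∑ b, q r θ b * x b) := by
    intro a
    rw [Matrix.mulVec, dotProduct]
    simp only [H, Matrix.of_apply, sub_mul, Finset.sum_sub_distrib]
    congr 1
    · congr 1
      · simp [mul_ite, ite_mul]
      · rw [Finset.mul_sum]; exact Finset.sum_congr rfl fun b _ => by ring
    · rw [Finset.mul_sum]; exact Finset.sum_congr rfl fun b _ => by ring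
  calc ∑ a, |(H r θ).mulVec x a|
      ≤ ∑ a, (|q r θ a| + |q r θ a| + p θ a * (∑ b, |q r θ b|)) := by
        refine Finset.sum_le_sum fun a _ => ?_
        rw [hcomp a]
        have h1 : q r θ a * x a - q r θ a * (∑ b, p θ b * x b) - p θ a * (∑ b, q r θ b * x b)
            = q r θ a * x a + (-(q r θ a * (∑ b, p θ b * x b))) + (-(p θ a * (∑ b, q r θ b * x b))) := by
          ring
        rw [h1]
        refine (abs_add_le _ _).trans (add_le_add ((abs_add_le _ _).trans (add_le_add ?_ ?_)) ?_)
        · rw [abs_mul]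
          calc |q r θ a| * |x a| ≤ |q r θ a| * 1 :=
                mul_le_mul_of_nonneg_left (hx a) (abs_nonneg _)
            _ = |q r θ a| := mul_one _
        · rw [abs_neg, abs_mul]
          calc |q r θ a| * |∑ b, p θ b * x b| ≤ |q r θ a| * 1 :=
                mul_le_mul_of_nonneg_left hPle (abs_nonneg _)
            _ = |q r θ a| := mul_one _
        · rw [abs_neg, abs_mul, abs_of_nonneg (hp a)]
          exact mul_le_mul_of_nonneg_left hQle (hp a)
    _ = (∑ b, |q r θ b|) + (∑ b, |q r θ b|) + (∑ b, |q r θ b|) := by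
        rw [Finset.sum_add_distrib, Finset.sum_add_distrib, ← Finset.sum_mul, hsp, one_mul]
    _ ≤ 6 * (r astar - m r θ) := by linarith [hWle]

end Stmt12Aux

open Stmt12Aux

/-- Softmax policy gradient bandit objective: ‖∇²f(θ)‖_{∞→1} ≤ 6 f(θ). -/
theorem stmt12 {K : ℕ} (hK : 0 < K) (r : Fin K → ℝ) (hr : ∀ a, r a ∈ Set.Icc (0:ℝ) 1)
    (astar : Fin K) (hastar : ∀ a, r a ≤ r astar)
    (π : (Fin K → ℝ) → Fin K → ℝ)
    (hπ : ∀ θ a, π θ a = Real.exp (θ a) / ∑ a', Real.exp (θ a'))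
    (f : (Fin K → ℝ) → ℝ) (hf : ∀ θ, f θ = r astar - ∑ a, π θ a * r a)
    (g : (Fin K → ℝ) → (Fin K → ℝ))
    (Hess : (Fin K → ℝ) → Matrix (Fin K) (Fin K) ℝ)
    (hgrad : ∀ θ, HasFDerivAt f (dotCLM (g θ)) θ)
    (hhess : ∀ θ, HasFDerivAt g (mulVecCLM (Hess θ)) θ) :
    ∀ θ, opNorm ⊤ 1 (Hess θ) ≤ 6 * f θ := by
  have hfm : ∀ θ, f θ = r astar - m r θ := by
    intro θ
    rw [hf θ, ← sum_p_r hK r θ]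
    congr 1
    exact Finset.sum_congr rfl fun a _ => by rw [hπ θ a]; rfl
  have hffun : f = fun θ => r astar - m r θ := funext hfm
  have hDf : ∀ θ, HasFDerivAt f (dotCLM (q r θ)) θ := by
    intro θ
    have h := (hasFDerivAt_m hK r θ).const_sub (r astar)
    rw [← hffun] at h
    refine HasFDerivAt.congr_fderiv h (Eq.symm ?_)
    ext x
    simp only [dotCLM_apply, ContinuousLinearMap.neg_apply, dotCLM_apply, ← Finset.sum_neg_distrib]
    exact Finset.sum_congr rfl fun a _ => by rw [q]; ring
  have hgq : g = q r := by
    funext θ a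
    have h := (hgrad θ).unique (hDf θ)
    have h2 := congrArg (fun L : (Fin K → ℝ) →L[ℝ] ℝ => L (Pi.single a 1)) h
    simpa only [dotCLM_single] using h2
  have hHq : ∀ θ, mulVecCLM (Hess θ) = mulVecCLM (H r θ) := by
    intro θ
    have h := hhess θ
    rw [hgq] at h
    exact h.unique (hasFDerivAt_q hK r θ)
  have hmv : ∀ θ x, (Hess θ).mulVec x = (H r θ).mulVec x := by
    intro θ x
    have := congrArg (fun L : (Fin K → ℝ) →L[ℝ] (Fin K → ℝ) => L x) (hHq θ)
    simpa only [mulVecCLM_apply] using this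
  intro θ
  have hf0 : 0 ≤ f θ := by
    rw [hfm θ]
    have : m r θ ≤ r astar := by
      rw [← sum_p_r hK r θ]
      calc ∑ a, p θ a * r a ≤ ∑ a, p θ a * r astar :=
            Finset.sum_le_sum fun a _ => mul_le_mul_of_nonneg_left (hastar a) (p_nonneg hK θ a)
        _ = r astar := by rw [← Finset.sum_mul, sum_p hK θ, one_mul]
    linarith
  rw [opNorm]
  refine Real.sSup_le ?_ (by linarith)
  rintro c ⟨x, hx, rfl⟩
  rw [hmv θ x, lpNorm_one_eq, hfm θ]
  exact key_bound hK r astar hastar θ x fun i => (abs_le_lpNorm_top x i).trans hx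
end

section
/- For the K-armed bandit softmax policy gradient objective f(θ) = r(a*) − ⟨π_θ, r⟩ (with π_θ the softmax of θ, r ∈ [0,1]^K, a* the optimal arm), for every q ≥ 1 and every θ it holds that ‖∇f(θ)‖_q ≥ π_θ(a*)·f(θ). -/
open scoped BigOperators

lemma coord_le_lpNorm {ι : Type*} [Fintype ι] (q : ENNReal) (hq : 1 ≤ q)
    (x : ι → ℝ) (i : ι) : |x i| ≤ lpNorm q x := by
  unfold lpNorm
  rcases eq_or_ne q ⊤ with h | h
  · subst h
    rw [show ‖(WithLp.equiv ⊤ (ι → ℝ)).symm x‖ = ⨆ j, ‖((WithLp.equiv ⊤ (ι → ℝ)).symm x) j‖ from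
      PiLp.norm_eq_ciSup _]
    exact le_ciSup (f := fun j => ‖x j‖) (Finite.bddAbove_range _) i
  · have hp : 0 < q.toReal := ENNReal.toReal_pos (by intro h0; simp [h0] at hq) h
    rw [PiLp.norm_eq_sum hp]
    have h1 : |x i| = (|x i| ^ q.toReal) ^ (1 / q.toReal) := by
      rw [← Real.rpow_mul (abs_nonneg _), mul_one_div, div_self hp.ne', Real.rpow_one]
    rw [h1]
    apply Real.rpow_le_rpow (Real.rpow_nonneg (abs_nonneg _) _)
    · exact Finset.single_le_sum (f := fun j => ‖x j‖ ^ q.toReal)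
        (fun j _ => Real.rpow_nonneg (norm_nonneg _) _) (Finset.mem_univ i)
    · positivity

lemma dotCLM_single {n : ℕ} (v : Fin n → ℝ) (i : Fin n) :
    dotCLM v (Pi.single i 1) = v i := by
  simp [dotCLM, LinearMap.proj, Pi.single_apply, mul_ite, Finset.sum_ite_eq']

/-- Softmax policy gradient bandit objective: ‖∇f(θ)‖_q ≥ π_θ(a*) f(θ) for all q ≥ 1. -/
theorem stmt13 {K : ℕ} (hK : 0 < K) (r : Fin K → ℝ) (hr : ∀ a, r a ∈ Set.Icc (0:ℝ) 1)
    (astar : Fin K) (hastar : ∀ a, r a ≤ r astar)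
    (π : (Fin K → ℝ) → Fin K → ℝ)
    (hπ : ∀ θ a, π θ a = Real.exp (θ a) / ∑ a', Real.exp (θ a'))
    (f : (Fin K → ℝ) → ℝ) (hf : ∀ θ, f θ = r astar - ∑ a, π θ a * r a)
    (g : (Fin K → ℝ) → (Fin K → ℝ))
    (hgrad : ∀ θ, HasFDerivAt f (dotCLM (g θ)) θ) :
    ∀ q : ENNReal, 1 ≤ q → ∀ θ, π θ astar * f θ ≤ lpNorm q (g θ) := by
  intro q hq θ
  haveI : Nonempty (Fin K) := ⟨astar⟩
  set e : Fin K → ℝ := Pi.single astar 1 with he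
  set S : ℝ := ∑ a, Real.exp (θ a) with hS
  have hSpos : 0 < S := Finset.sum_pos (fun a _ => Real.exp_pos _) Finset.univ_nonempty
  -- π nonneg and sums to 1
  have hπnn : ∀ a, 0 ≤ π θ a := fun a => by
    rw [hπ]; positivity
  have hπsum : ∑ a, π θ a = 1 := by
    simp only [hπ]; rw [← Finset.sum_div, ← hS, div_self hSpos.ne']
  -- f θ ≥ 0
  have hfnn : 0 ≤ f θ := by
    rw [hf]
    have : ∑ a, π θ a * r a ≤ ∑ a, π θ a * r astar :=
      Finset.sum_le_sum (fun a _ => mul_le_mul_of_nonneg_left (hastar a) (hπnn a))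
    have h2 : ∑ a, π θ a * r astar = r astar := by
      rw [← Finset.sum_mul, hπsum, one_mul]
    linarith
  -- curve
  have hc : HasDerivAt (fun t : ℝ => θ + t • e) e 0 := by
    simpa using ((hasDerivAt_id (0:ℝ)).smul_const e).const_add θ
  have h1 : HasDerivAt (fun t : ℝ => f (θ + t • e)) (g θ astar) 0 := by
    have := (hgrad θ).comp_hasDerivAt_of_eq 0 hc (by simp)
    simpa [Function.comp_def, he, dotCLM_single] using this
  -- explicit formula along the curve
  have funEq : ∀ t : ℝ, f (θ + t • e) =
      r astar - (∑ a, Real.exp (θ a + t * e a) * r a) / (∑ a, Real.exp (θ a + t * e a)) := by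
    intro t
    rw [hf]
    congr 1
    rw [Finset.sum_div]
    refine Finset.sum_congr rfl fun a _ => ?_
    rw [hπ]
    simp only [Pi.add_apply, Pi.smul_apply, smul_eq_mul]
    rw [div_mul_eq_mul_div]
  -- derivative of numerator and denominator
  have hU : HasDerivAt (fun t : ℝ => ∑ a, Real.exp (θ a + t * e a) * r a)
      (Real.exp (θ astar) * r astar) 0 := by
    have : ∀ a : Fin K, HasDerivAt (fun t : ℝ => Real.exp (θ a + t * e a) * r a)
        (Real.exp (θ a) * e a * r a) 0 := by
      intro a
      have hi : HasDerivAt (fun t : ℝ => θ a + t * e a) (e a) 0 := by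
        simpa using ((hasDerivAt_id (0:ℝ)).mul_const (e a)).const_add (θ a)
      have := (hi.exp).mul_const (r a)
      simpa [mul_comm] using this
    have hsum := HasDerivAt.fun_sum (u := Finset.univ) (fun a _ => this a)
    have : ∑ a, Real.exp (θ a) * e a * r a = Real.exp (θ astar) * r astar := by
      simp [he, Pi.single_apply, mul_ite, Finset.sum_ite_eq']
    rwa [this] at hsum
  have hD : HasDerivAt (fun t : ℝ => ∑ a, Real.exp (θ a + t * e a))
      (Real.exp (θ astar)) 0 := by
    have : ∀ a : Fin K, HasDerivAt (fun t : ℝ => Real.exp (θ a + t * e a))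
        (Real.exp (θ a) * e a) 0 := by
      intro a
      have hi : HasDerivAt (fun t : ℝ => θ a + t * e a) (e a) 0 := by
        simpa using ((hasDerivAt_id (0:ℝ)).mul_const (e a)).const_add (θ a)
      simpa [mul_comm] using hi.exp
    have hsum := HasDerivAt.fun_sum (u := Finset.univ) (fun a _ => this a)
    have : ∑ a, Real.exp (θ a) * e a = Real.exp (θ astar) := by
      simp [he, Pi.single_apply, mul_ite, Finset.sum_ite_eq']
    rwa [this] at hsum
  have hD0 : (∑ a, Real.exp (θ a + (0:ℝ) * e a)) ≠ 0 := by
    simp only [zero_mul, add_zero]; exact hSpos.ne'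
  have hUD := (hU.fun_div hD hD0).const_sub (r astar)
  have h2 : HasDerivAt (fun t : ℝ => f (θ + t • e)) (-(π θ astar * f θ)) 0 := by
    have heq : (fun t : ℝ => r astar -
        (∑ a, Real.exp (θ a + t * e a) * r a) / (∑ a, Real.exp (θ a + t * e a)))
        = fun t : ℝ => f (θ + t • e) := by
      funext t; rw [funEq t]
    rw [heq] at hUD
    refine hUD.congr_deriv (Eq.symm ?_)
    rw [hπ, hf]
    simp only [zero_mul, add_zero, ← hS]
    have : ∑ a, π θ a * r a = (∑ a, Real.exp (θ a) * r a) / S := by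
      rw [Finset.sum_div]
      refine Finset.sum_congr rfl fun a _ => ?_
      rw [hπ, ← hS, div_mul_eq_mul_div]
    rw [this]
    field_simp
  have hgval : g θ astar = -(π θ astar * f θ) := h1.unique h2
  calc π θ astar * f θ = |g θ astar| := by
        rw [hgval, abs_neg, abs_of_nonneg (mul_nonneg (hπnn astar) hfnn)]
    _ ≤ lpNorm q (g θ) := coord_le_lpNorm q hq (g θ) astar
end

section
/- Let (f_t)_{t≥1} be nonnegative reals, A, B > 0, r ∈ (0, 1), δ > 0, and η ≤ A·δʳ/(2B), such that f_{t+1} ≤ f_t − η·A·f_tʳ + η²·B for all t. Let T_δ be the first index with f_{T_δ} ≤ δ. Then for all t < T_δ, f_{t+1} ≤ f_t and f_{t+1}^{1−r} ≤ f_t^{1−r} − (1−r)·A·η/2; consequently T_δ ≤ 2·f₁^{1−r}/(A·η·(1−r)) + 1. -/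
open Real

/-- Key one-step lemma: if `δ ≤ x`, then `x - (ηA/2)·x^r` is an upper bound for
the next iterate, and the `(1-r)`-power drops by at least `(1-r)Aη/2`. -/
lemma stmt16_key {A B r δ η x y : ℝ} (hA : 0 < A) (hB : 0 < B)
    (hr0 : 0 < r) (hr1 : r < 1) (hδ : 0 < δ) (hη : 0 < η)
    (hηle : η ≤ A * δ ^ r / (2 * B)) (hy : 0 ≤ y) (hx : δ ≤ x)
    (hrec : y ≤ x - η * A * x ^ r + η ^ 2 * B) :
    y ≤ x ∧ y ^ (1 - r) ≤ x ^ (1 - r) - (1 - r) * A * η / 2 := by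
  have hx0 : 0 < x := lt_of_lt_of_le hδ hx
  have hδr : (0:ℝ) < δ ^ r := rpow_pos_of_pos hδ r
  have hxr : (0:ℝ) < x ^ r := rpow_pos_of_pos hx0 r
  have hδrx : δ ^ r ≤ x ^ r := rpow_le_rpow hδ.le hx hr0.le
  have hηB : η * B ≤ A * δ ^ r / 2 := by
    rw [le_div_iff₀ (by positivity)] at hηle
    nlinarith
  have hEB : η ^ 2 * B ≤ η * A * x ^ r / 2 := by
    have h1 : η * (η * B) ≤ η * (A * δ ^ r / 2) :=
      mul_le_mul_of_nonneg_left hηB hη.le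
    have h2 : η * (A * δ ^ r / 2) ≤ η * (A * x ^ r / 2) :=
      mul_le_mul_of_nonneg_left (by nlinarith) hη.le
    nlinarith
  have hstep : y ≤ x - η * A / 2 * x ^ r := by nlinarith
  set d : ℝ := η * A / 2 * x ^ r with hd
  have hd0 : 0 < d := by positivity
  have hdx : d ≤ x := by nlinarith
  constructor
  · nlinarith
  · have h1 : y ^ (1 - r) ≤ (x - d) ^ (1 - r) :=
      rpow_le_rpow hy hstep (by linarith)
    have hs : -1 ≤ -(d / x) := by
      rw [neg_le_neg_iff]
      exact (div_le_one hx0).mpr hdx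
    have hbern : (1 + -(d / x)) ^ (1 - r) ≤ 1 + (1 - r) * -(d / x) :=
      rpow_one_add_le_one_add_mul_self hs (by linarith) (by linarith)
    have hxd : x - d = x * (1 + -(d / x)) := by
      field_simp
      ring
    have h2 : (x - d) ^ (1 - r) = x ^ (1 - r) * (1 + -(d / x)) ^ (1 - r) := by
      rw [hxd, mul_rpow hx0.le (by nlinarith [(div_le_one hx0).mpr hdx])]
    have hxpr : x ^ (1 - r) * x ^ r = x := by
      rw [← rpow_add hx0]; norm_num
    have hxp : x ^ (1 - r) * (d / x) = η * A / 2 := by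
      rw [hd, show x ^ (1 - r) * (η * A / 2 * x ^ r / x)
          = η * A / 2 * (x ^ (1 - r) * x ^ r) / x by ring, hxpr,
        mul_div_assoc, div_self hx0.ne', mul_one]
    have h3 : x ^ (1 - r) * (1 + (1 - r) * -(d / x)) =
        x ^ (1 - r) - (1 - r) * A * η / 2 := by
      have heq : x ^ (1 - r) * (1 + (1 - r) * -(d / x))
          = x ^ (1 - r) - (1 - r) * (x ^ (1 - r) * (d / x)) := by ring
      rw [heq, hxp]; ring
    have h4 : (x - d) ^ (1 - r) ≤ x ^ (1 - r) - (1 - r) * A * η / 2 := by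
      rw [h2, ← h3]
      have hxp0 : (0:ℝ) ≤ x ^ (1 - r) := rpow_nonneg hx0.le _
      exact mul_le_mul_of_nonneg_left hbern hxp0
    linarith

/-- Phase-2 recursion lemma for exponent `r ∈ (0,1)`: descent, telescoping of
`f^{1-r}`, and a bound on the hitting time `T_δ` of level `δ`. -/
theorem stmt16 (f : ℕ → ℝ) (A B r δ η : ℝ) (hA : 0 < A) (hB : 0 < B)
    (hr0 : 0 < r) (hr1 : r < 1) (hδ : 0 < δ) (hη : 0 < η)
    (hηle : η ≤ A * δ ^ r / (2 * B)) (hfnn : ∀ t, 0 ≤ f t)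
    (hrec : ∀ t, 1 ≤ t → f (t + 1) ≤ f t - η * A * f t ^ r + η ^ 2 * B)
    (Tδ : ℕ) (hT : Tδ = sInf {t : ℕ | 1 ≤ t ∧ f t ≤ δ}) :
    {t : ℕ | 1 ≤ t ∧ f t ≤ δ}.Nonempty ∧
    (∀ t, 1 ≤ t → t < Tδ →
      f (t + 1) ≤ f t ∧ f (t + 1) ^ (1 - r) ≤ f t ^ (1 - r) - (1 - r) * A * η / 2) ∧
    (Tδ : ℝ) ≤ 2 * f 1 ^ (1 - r) / (A * η * (1 - r)) + 1 := by
  set c : ℝ := (1 - r) * A * η / 2 with hc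
  have hr1' : (0:ℝ) < 1 - r := by linarith
  have hc0 : 0 < c := by positivity
  have key : ∀ t, 1 ≤ t → δ ≤ f t →
      f (t + 1) ≤ f t ∧ f (t + 1) ^ (1 - r) ≤ f t ^ (1 - r) - c := by
    intro t ht hft
    exact stmt16_key hA hB hr0 hr1 hδ hη hηle (hfnn _) hft (hrec t ht)
  -- telescoping
  have tele : ∀ n : ℕ, (∀ i < n, δ ≤ f (1 + i)) →
      f (1 + n) ^ (1 - r) ≤ f 1 ^ (1 - r) - n * c := by
    intro n
    induction n with
    | zero => intro _; simp
    | succ n ih =>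
      intro h
      have h1 := ih (fun i hi => h i (by omega))
      have h2 := (key (1 + n) (by omega) (h n (by omega))).2
      have : (1 : ℕ) + (n + 1) = (1 + n) + 1 := by omega
      rw [this]
      push_cast
      push_cast at h1
      linarith
  have hne : {t : ℕ | 1 ≤ t ∧ f t ≤ δ}.Nonempty := by
    by_contra h
    rw [Set.not_nonempty_iff_eq_empty] at h
    have hall : ∀ t, 1 ≤ t → δ ≤ f t := by
      intro t ht
      by_contra h'
      have : t ∈ {t : ℕ | 1 ≤ t ∧ f t ≤ δ} := ⟨ht, by linarith⟩
      simp [h] at this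
    obtain ⟨n, hn⟩ := exists_nat_gt ((f 1 ^ (1 - r) - δ ^ (1 - r)) / c)
    have h1 := tele n (fun i _ => hall (1 + i) (by omega))
    have h2 : δ ^ (1 - r) ≤ f (1 + n) ^ (1 - r) :=
      rpow_le_rpow hδ.le (hall (1 + n) (by omega)) (by linarith)
    rw [div_lt_iff₀ hc0] at hn
    linarith
  refine ⟨hne, ?_, ?_⟩
  · intro t ht htT
    have htS : t ∉ {t : ℕ | 1 ≤ t ∧ f t ≤ δ} :=
      Nat.notMem_of_lt_sInf (hT ▸ htT)
    have hft : δ ≤ f t := by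
      by_contra h'
      exact htS ⟨ht, by linarith⟩
    exact key t ht hft
  · have hTmem : Tδ ∈ {t : ℕ | 1 ≤ t ∧ f t ≤ δ} := hT ▸ Nat.sInf_mem hne
    obtain ⟨hT1, hTf⟩ := hTmem
    have h1 := tele (Tδ - 1) (fun i hi => by
      have hiT : 1 + i < Tδ := by omega
      have hiS : (1 + i) ∉ {t : ℕ | 1 ≤ t ∧ f t ≤ δ} :=
        Nat.notMem_of_lt_sInf (hT ▸ hiT)
      by_contra h'
      exact hiS ⟨by omega, by push_neg at h'; linarith⟩)
    have hTT : 1 + (Tδ - 1) = Tδ := by omega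
    rw [hTT] at h1
    have h2 : (0:ℝ) ≤ f Tδ ^ (1 - r) := rpow_nonneg (hfnn _) _
    have hcast : ((Tδ - 1 : ℕ) : ℝ) = (Tδ : ℝ) - 1 := by
      push_cast [Nat.cast_sub hT1]; ring
    rw [hcast] at h1
    have h3 : ((Tδ : ℝ) - 1) * c ≤ f 1 ^ (1 - r) := by linarith
    have hpos : 0 < A * η * (1 - r) := by positivity
    rw [div_add' _ _ _ hpos.ne', le_div_iff₀ hpos]
    rw [hc] at h3
    nlinarith [h3]
end

section
/- Consider minimizing f(θ) = θ²/2 over ℝ with normalized steepest descent θ_{t+1} = θ_t − η·sign(θ_t) using a constant step-size η > 0. For any ε ∈ (0, 1/8), there exists an initialization θ₁ such that the hitting time T_ε := inf{t ≥ 1 : f(θ_t) ≤ ε} satisfies T_ε = Ω(1/√ε). Specifically: if η > √(8ε), initializing θ₁ = η/2 makes the iterates oscillate between ±η/2 with f(θ_t) = η²/8 > ε for all t; and if η ≤ √(8ε), initializing θ₁ = 1 yields T_ε ≥ 1 + (1 − √(2ε))/√(8ε). -/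
/-- Lower bound on the hitting time of normalized steepest descent (sign GD) on the
one-dimensional quadratic `f(θ) = θ²/2`. -/
theorem stmt17 (ε η : ℝ) (hε : 0 < ε) (hε8 : ε < 1 / 8) (hη : 0 < η)
    (θ : ℕ → ℝ) (hupd : ∀ t, 1 ≤ t → θ (t + 1) = θ t - η * Real.sign (θ t)) :
    (Real.sqrt (8 * ε) < η → θ 1 = η / 2 →
      ∀ t, 1 ≤ t → (θ t) ^ 2 / 2 = η ^ 2 / 8 ∧ ε < (θ t) ^ 2 / 2) ∧
    (η ≤ Real.sqrt (8 * ε) → θ 1 = 1 →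
      ∀ T, 1 ≤ T → (θ T) ^ 2 / 2 ≤ ε →
        1 + (1 - Real.sqrt (2 * ε)) / Real.sqrt (8 * ε) ≤ (T : ℝ)) := by
  constructor
  · intro hlt h1 t ht
    have key : ∀ t, 1 ≤ t → θ t = η / 2 ∨ θ t = -(η / 2) := by
      intro t ht
      induction t, ht using Nat.le_induction with
      | base => exact Or.inl h1
      | succ n hn ih =>
        rcases ih with h | h
        · right
          rw [hupd n hn, h, Real.sign_of_pos (by linarith)]
          ring
        · left
          rw [hupd n hn, h, Real.sign_of_neg (by linarith)]
          ring
    have hsq : (θ t) ^ 2 / 2 = η ^ 2 / 8 := by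
      rcases key t ht with h | h <;> rw [h] <;> ring
    refine ⟨hsq, ?_⟩
    rw [hsq]
    have h8 : Real.sqrt (8 * ε) ^ 2 = 8 * ε := Real.sq_sqrt (by linarith)
    nlinarith [Real.sqrt_nonneg (8 * ε)]
  · intro hle h1 T hT hTε
    have habs : ∀ t : ℕ, 1 ≤ t → 1 - ((t : ℝ) - 1) * η ≤ |θ t| := by
      intro t ht
      induction t, ht using Nat.le_induction with
      | base => simp [h1]
      | succ n hn ih =>
        have hs : |Real.sign (θ n)| ≤ 1 := by
          rcases Real.sign_apply_eq (θ n) with h | h | h <;> rw [h] <;> norm_num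
        have : |θ n| - η ≤ |θ (n + 1)| := by
          rw [hupd n hn]
          have := abs_sub_abs_le_abs_sub (θ n) (η * Real.sign (θ n))
          have hη' : |η * Real.sign (θ n)| ≤ η := by
            rw [abs_mul, abs_of_pos hη]
            nlinarith
          linarith [abs_abs (θ n)]
        push_cast
        linarith
    have h2ε : |θ T| ≤ Real.sqrt (2 * ε) := by
      have : (θ T) ^ 2 ≤ 2 * ε := by linarith
      calc |θ T| = Real.sqrt ((θ T) ^ 2) := (Real.sqrt_sq_eq_abs _).symm
        _ ≤ Real.sqrt (2 * ε) := Real.sqrt_le_sqrt this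
    have h8pos : 0 < Real.sqrt (8 * ε) := Real.sqrt_pos.mpr (by linarith)
    have hT1 : (1 : ℝ) ≤ (T : ℝ) := by exact_mod_cast hT
    have hstep : 1 - Real.sqrt (2 * ε) ≤ ((T : ℝ) - 1) * Real.sqrt (8 * ε) := by
      have := habs T hT
      nlinarith
    have := (div_le_iff₀ h8pos).mpr hstep
    linarith
end

section
/- Let g_{s,i} be real numbers for s = 1,…,t and i = 1,…,D, β ∈ (0,1), and define v_{t,i} = (1−β)·Σ_{s=1}^t β^{t−s}·g_{s,i}², assuming v_{t,i} > 0 for all i. Let ‖g_s‖₁ = Σᵢ |g_{s,i}|. Then Σᵢ g_{t,i}²/√(v_{t,i}) ≥ ‖g_t‖₁² / (√(1−β)·Σ_{j=0}^{t−1} (√β)ʲ·‖g_{t−j}‖₁). -/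
lemma my_sqrt_pow_nat (a : ℝ) (ha : 0 ≤ a) (n : ℕ) :
    Real.sqrt (a ^ n) = Real.sqrt a ^ n := by
  induction n with
  | zero => simp
  | succ n ih => rw [pow_succ, pow_succ, Real.sqrt_mul (by positivity), ih]

lemma my_sqrt_add_le (a b : ℝ) : Real.sqrt (a + b) ≤ Real.sqrt a + Real.sqrt b := by
  have ha : a ≤ Real.sqrt a ^ 2 := by
    rcases le_or_gt 0 a with h | h
    · rw [Real.sq_sqrt h]
    · nlinarith [Real.sqrt_nonneg a]
  have hb : b ≤ Real.sqrt b ^ 2 := by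
    rcases le_or_gt 0 b with h | h
    · rw [Real.sq_sqrt h]
    · nlinarith [Real.sqrt_nonneg b]
  calc Real.sqrt (a + b) ≤ Real.sqrt ((Real.sqrt a + Real.sqrt b) ^ 2) :=
        Real.sqrt_le_sqrt (by nlinarith [Real.sqrt_nonneg a, Real.sqrt_nonneg b])
    _ = Real.sqrt a + Real.sqrt b := Real.sqrt_sq (by positivity)

lemma my_sqrt_sum_le {ι : Type*} (s : Finset ι) (f : ι → ℝ) :
    Real.sqrt (∑ i ∈ s, f i) ≤ ∑ i ∈ s, Real.sqrt (f i) := by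
  classical
  induction s using Finset.cons_induction with
  | empty => simp
  | cons a s ha ih =>
    rw [Finset.sum_cons, Finset.sum_cons]
    calc Real.sqrt (f a + ∑ i ∈ s, f i)
        ≤ Real.sqrt (f a) + Real.sqrt (∑ i ∈ s, f i) := my_sqrt_add_le _ _
      _ ≤ _ := by linarith

/-- RMSProp preconditioner lemma:
`Σᵢ g_{t,i}²/√v_{t,i} ≥ ‖g_t‖₁² / (√(1-β) Σ_{j<t} (√β)ʲ ‖g_{t-j}‖₁)`. -/
theorem stmt19 {D : ℕ} (t : ℕ) (ht : 1 ≤ t) (β : ℝ) (hβ0 : 0 < β) (hβ1 : β < 1)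
    (g : ℕ → Fin D → ℝ) (v : Fin D → ℝ)
    (hv : ∀ i, v i = (1 - β) * ∑ s ∈ Finset.Icc 1 t, β ^ (t - s) * (g s i) ^ 2)
    (hvpos : ∀ i, 0 < v i) :
    (∑ i, |g t i|) ^ 2 /
        (Real.sqrt (1 - β) * ∑ j ∈ Finset.range t, Real.sqrt β ^ j * ∑ i, |g (t - j) i|) ≤
      ∑ i, (g t i) ^ 2 / Real.sqrt (v i) := by
  rcases Nat.eq_zero_or_pos D with hD | hD
  · subst hD; simp
  set R := ∑ i, (g t i) ^ 2 / Real.sqrt (v i) with hR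
  set u := ∑ i, Real.sqrt (v i) with hu
  set B := Real.sqrt (1 - β) * ∑ j ∈ Finset.range t, Real.sqrt β ^ j * ∑ i, |g (t - j) i|
    with hB
  have hR0 : 0 ≤ R := Finset.sum_nonneg fun i _ => by positivity
  -- Cauchy–Schwarz
  have hCS : (∑ i, |g t i|) ^ 2 ≤ R * u := by
    have := Finset.sum_mul_sq_le_sq_mul_sq Finset.univ
      (fun i => Real.sqrt ((g t i) ^ 2 / Real.sqrt (v i)))
      (fun i => Real.sqrt (Real.sqrt (v i)))
    have key : ∀ i : Fin D,
        Real.sqrt ((g t i) ^ 2 / Real.sqrt (v i)) * Real.sqrt (Real.sqrt (v i)) = |g t i| := by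
      intro i
      have hvi : 0 < Real.sqrt (v i) := Real.sqrt_pos.2 (hvpos i)
      rw [← Real.sqrt_mul (by positivity), div_mul_cancel₀ _ hvi.ne', Real.sqrt_sq_eq_abs]
    have key2 : ∀ i : Fin D,
        Real.sqrt ((g t i) ^ 2 / Real.sqrt (v i)) ^ 2 = (g t i) ^ 2 / Real.sqrt (v i) := by
      intro i
      exact Real.sq_sqrt (by positivity)
    have key3 : ∀ i : Fin D, Real.sqrt (Real.sqrt (v i)) ^ 2 = Real.sqrt (v i) := by
      intro i; exact Real.sq_sqrt (Real.sqrt_nonneg _)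
    simp only [key, key2, key3] at this
    exact this
  -- u ≤ B
  have hub : u ≤ B := by
    have step : ∀ i : Fin D, Real.sqrt (v i) ≤
        Real.sqrt (1 - β) * ∑ s ∈ Finset.Icc 1 t, Real.sqrt β ^ (t - s) * |g s i| := by
      intro i
      rw [hv i, Real.sqrt_mul (by linarith)]
      refine mul_le_mul_of_nonneg_left ?_ (Real.sqrt_nonneg _)
      calc Real.sqrt (∑ s ∈ Finset.Icc 1 t, β ^ (t - s) * (g s i) ^ 2)
          ≤ ∑ s ∈ Finset.Icc 1 t, Real.sqrt (β ^ (t - s) * (g s i) ^ 2) :=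
            my_sqrt_sum_le _ _
        _ = ∑ s ∈ Finset.Icc 1 t, Real.sqrt β ^ (t - s) * |g s i| := by
            refine Finset.sum_congr rfl fun s _ => ?_
            rw [Real.sqrt_mul (by positivity), Real.sqrt_sq_eq_abs,
              my_sqrt_pow_nat _ hβ0.le]
    calc u ≤ ∑ i, Real.sqrt (1 - β) *
          ∑ s ∈ Finset.Icc 1 t, Real.sqrt β ^ (t - s) * |g s i| :=
          Finset.sum_le_sum fun i _ => step i
      _ = Real.sqrt (1 - β) * ∑ s ∈ Finset.Icc 1 t, Real.sqrt β ^ (t - s) * ∑ i, |g s i| := by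
          rw [← Finset.mul_sum, Finset.sum_comm]
          congr 1
          refine Finset.sum_congr rfl fun s _ => ?_
          rw [Finset.mul_sum]
      _ = B := by
          rw [hB]
          congr 1
          refine Finset.sum_nbij' (fun s => t - s) (fun j => t - j) ?_ ?_ ?_ ?_ ?_
          · intro s hs
            simp only [Finset.mem_Icc] at hs
            simp only [Finset.mem_range]
            omega
          · intro j hj
            simp only [Finset.mem_range] at hj
            simp only [Finset.mem_Icc]
            omega
          · intro s hs
            simp only [Finset.mem_Icc] at hs
            omega
          · intro j hj
            simp only [Finset.mem_range] at hj
            omega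
          · intro s hs
            simp only [Finset.mem_Icc] at hs
            have hts : t - (t - s) = s := by omega
            rw [hts]
  -- B > 0
  have hu0 : 0 < u := by
    obtain ⟨i0⟩ : Nonempty (Fin D) := ⟨⟨0, hD⟩⟩
    refine Finset.sum_pos' (fun i _ => Real.sqrt_nonneg _) ⟨i0, Finset.mem_univ _, ?_⟩
    exact Real.sqrt_pos.2 (hvpos i0)
  have hB0 : 0 < B := lt_of_lt_of_le hu0 hub
  rw [div_le_iff₀ hB0]
  calc (∑ i, |g t i|) ^ 2 ≤ R * u := hCS
    _ ≤ R * B := mul_le_mul_of_nonneg_left hub hR0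
end
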